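/- If q ≥ 5, 2 < m ≤ q - 1, and 1 ≤ k ≤ (m-1)/2, then Σ_{i=1}^{k} C(m,i)(q-1)^{i-1} ≤ q^{m-1} - q^{m-2}. -/

import Mathlib

/-- If q ≥ 5, 2 < m ≤ q - 1 and 1 ≤ k ≤ (m-1)/2, then Condition (2) holds:
Σ_{i=1}^{k} C(m,i)(q-1)^(i-1) ≤ q^(m-1) - q^(m-2). -/
theorem stmt12 (q m k : ℕ) (hq : 5 ≤ q) (hm1 : 2 < m) (hm2 : m ≤ q - 1)
    (hk1 : 1 ≤ k) (hk2 : k ≤ (m - 1) / 2) :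
    ∑ i ∈ Finset.Icc 1 k, m.choose i * (q - 1) ^ (i - 1) ≤ q ^ (m - 1) - q ^ (m - 2) := by
  have h2k : 2 * k ≤ m - 1 := (Nat.le_div_iff_mul_le (by norm_num)).mp hk2 |>.trans_eq' (by ring_nf)
  have hterm : ∀ i ∈ Finset.Icc 1 k, m.choose i * (q - 1) ^ (i - 1) ≤ q ^ (m - 2) := by
    intro i hi
    obtain ⟨hi1, hi2⟩ := Finset.mem_Icc.mp hi
    calc m.choose i * (q - 1) ^ (i - 1) ≤ m ^ i * (q - 1) ^ (i - 1) :=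
          Nat.mul_le_mul_right _ (Nat.choose_le_pow _ _)
      _ ≤ q ^ i * q ^ (i - 1) := by
          apply Nat.mul_le_mul
          · exact Nat.pow_le_pow_left (hm2.trans (Nat.sub_le _ _)) _
          · exact Nat.pow_le_pow_left (Nat.sub_le _ _) _
      _ = q ^ (i + (i - 1)) := (pow_add q i (i-1)).symm
      _ ≤ q ^ (m - 2) := by
          apply Nat.pow_le_pow_right (by omega)
          omega
  calc ∑ i ∈ Finset.Icc 1 k, m.choose i * (q - 1) ^ (i - 1)
      ≤ (Finset.Icc 1 k).card * q ^ (m - 2) := Finset.sum_le_card_nsmul _ _ _ hterm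
    _ = k * q ^ (m - 2) := by rw [Nat.card_Icc]; simp
    _ ≤ (q - 1) * q ^ (m - 2) := Nat.mul_le_mul_right _ (by omega)
    _ = q ^ (m - 1) - q ^ (m - 2) := by
        have : m - 1 = (m - 2) + 1 := by omega
        rw [this, pow_succ, Nat.sub_mul, Nat.mul_comm]
        ring_nf
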